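/- Let F be convex on a closed convex set K with optimal value F_* attained on a nonempty set K_*. Suppose F satisfies the local error bound dist(w, K_*) ≤ c(F(w) - F_*)^θ for all w in the ε-sublevel set S_ε, with θ ∈ (0,1] and c > 0. If a point w satisfies F(w) - F_* ≤ ε₁ + ε for some ε₁ > 0, then its projection w† onto S_ε satisfies ‖w† - w‖ ≤ c ε₁ / ε^{1-θ}. -/

import Mathlib

theorem stmt_11 (d : ℕ) (K : Set (EuclideanSpace ℝ (Fin d)))
    (hK : Convex ℝ K) (hKc : IsClosed K)
    (F : EuclideanSpace ℝ (Fin d) → ℝ) (hF : ConvexOn ℝ K F)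
    (Kstar : Set (EuclideanSpace ℝ (Fin d)))
    (hKstar : Kstar = {w ∈ K | ∀ v ∈ K, F w ≤ F v}) (hne : Kstar.Nonempty)
    (Fstar : ℝ) (hFstar : ∀ w ∈ Kstar, F w = Fstar)
    (ε : ℝ) (hε : 0 < ε)
    (Sε : Set (EuclideanSpace ℝ (Fin d))) (hSε : Sε = {w ∈ K | F w ≤ Fstar + ε})
    (θ c : ℝ) (hθ : θ ∈ Set.Ioc (0:ℝ) 1) (hc : 0 < c)
    (hleb : ∀ v ∈ Sε, Metric.infDist v Kstar ≤ c * (F v - Fstar) ^ θ)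
    (ε₁ : ℝ) (hε₁ : 0 < ε₁)
    (w : EuclideanSpace ℝ (Fin d)) (hw : w ∈ K) (hgap : F w - Fstar ≤ ε₁ + ε)
    (wd : EuclideanSpace ℝ (Fin d)) (hwd : wd ∈ Sε)
    (hproj : ∀ v ∈ Sε, ‖wd - w‖ ≤ ‖v - w‖) :
    ‖wd - w‖ ≤ c * ε₁ / ε ^ (1 - θ) := by
  have hεθ : (0:ℝ) < ε ^ θ := Real.rpow_pos_of_pos hε θ
  have hε1θ : (0:ℝ) < ε ^ (1 - θ) := Real.rpow_pos_of_pos hε _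
  have hmin : ∀ v ∈ K, Fstar ≤ F v := by
    intro v hv
    obtain ⟨u0, hu0⟩ := hne
    have h := hKstar ▸ hu0
    have := h.2 v hv
    rw [← hFstar u0 hu0]; exact this
  by_cases hcase : F w ≤ Fstar + ε
  · have hwS : w ∈ Sε := by rw [hSε]; exact ⟨hw, hcase⟩
    have h0 : ‖wd - w‖ ≤ 0 := by simpa using hproj w hwS
    have hr : (0:ℝ) ≤ c * ε₁ / ε ^ (1 - θ) := by positivity
    linarith [norm_nonneg (wd - w)]
  · push_neg at hcase
    set Δ := F w - Fstar with hΔ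
    have hΔε : ε < Δ := by simp only [hΔ]; linarith
    have hΔpos : 0 < Δ := lt_trans hε hΔε
    set t := ε / Δ with ht
    have ht0 : 0 < t := div_pos hε hΔpos
    have ht1 : t < 1 := (div_lt_one hΔpos).2 hΔε
    have hwdK : wd ∈ K := by rw [hSε] at hwd; exact hwd.1
    have hwdF : F wd ≤ Fstar + ε := by rw [hSε] at hwd; exact hwd.2
    have hdist : Metric.infDist wd Kstar ≤ c * ε ^ θ := by
      calc Metric.infDist wd Kstar ≤ c * (F wd - Fstar) ^ θ := hleb wd hwd
        _ ≤ c * ε ^ θ := by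
            apply mul_le_mul_of_nonneg_left _ hc.le
            exact Real.rpow_le_rpow (by linarith [hmin wd hwdK]) (by linarith) hθ.1.le
    have key : t * ‖wd - w‖ ≤ (1 - t) * (c * ε ^ θ) := by
      apply le_of_forall_pos_le_add
      intro δ hδ
      obtain ⟨u, huK, hud⟩ := (Metric.infDist_lt_iff hne).1
        (lt_of_le_of_lt hdist (by linarith : c * ε ^ θ < c * ε ^ θ + δ))
      have huK' : u ∈ K := by
        have := hKstar ▸ huK; exact this.1
      have hFu : F u = Fstar := hFstar u huK
      set v := (1 - t) • u + t • w with hv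
      have hvK : v ∈ K := hK huK' hw (by linarith) ht0.le (by ring)
      have hFv : F v ≤ Fstar + ε := by
        have hcx := hF.2 huK' hw (by linarith : (0:ℝ) ≤ 1 - t) ht0.le (by ring)
        have ht' : t * Δ = ε := by
          rw [ht]; exact div_mul_cancel₀ ε hΔpos.ne'
        calc F v ≤ (1 - t) * F u + t * F w := hcx
          _ = Fstar + t * Δ := by rw [hFu]; simp only [hΔ]; ring
          _ = Fstar + ε := by rw [ht']
      have hvS : v ∈ Sε := by rw [hSε]; exact ⟨hvK, hFv⟩
      have h1 : ‖wd - w‖ ≤ ‖v - w‖ := hproj v hvS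
      have h2 : v - w = (1 - t) • (u - w) := by
        simp only [hv, smul_sub]; module
      have h3 : ‖v - w‖ = (1 - t) * ‖u - w‖ := by
        rw [h2, norm_smul, Real.norm_eq_abs, abs_of_nonneg (by linarith)]
      have h4 : ‖u - w‖ ≤ ‖u - wd‖ + ‖wd - w‖ := norm_sub_le_norm_sub_add_norm_sub u wd w
      have h5 : ‖u - wd‖ ≤ c * ε ^ θ + δ := by
        rw [← dist_eq_norm, dist_comm]; exact hud.le
      nlinarith [norm_nonneg (wd - w)]
    have hstep : ‖wd - w‖ ≤ (1 - t) / t * (c * ε ^ θ) := by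
      rw [div_mul_eq_mul_div, le_div_iff₀ ht0]
      nlinarith
    have htfrac : (1 - t) / t = (Δ - ε) / ε := by
      field_simp [ht]
      have htΔ : t * Δ = ε := by rw [ht]; exact div_mul_cancel₀ ε hΔpos.ne'
      linear_combination -htΔ
    have hfinal : (1 - t) / t * (c * ε ^ θ) ≤ ε₁ / ε * (c * ε ^ θ) := by
      apply mul_le_mul_of_nonneg_right _ (by positivity)
      rw [htfrac]
      gcongr
      linarith
    have heq : ε₁ / ε * (c * ε ^ θ) = c * ε₁ / ε ^ (1 - θ) := by
      rw [Real.rpow_sub hε, Real.rpow_one]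
      field_simp
    linarith [hstep.trans hfinal, heq.symm.le]
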